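/- Given T > 0, there exist positive constants k_T^1, k_T^2, depending only on D and T, such that: for every continuous h: [0,∞) → ℝ^m, every φ ∈ BU with Dφ = h(0), and every continuous x: ℝ → ℝ^m with x_0 = φ and Dx_t = h(t) for all t ≥ 0, one has ‖x_t‖_∞ ≤ k_T^1 · sup_{0≤u≤t} ‖h(u)‖ + k_T^2 · ‖φ‖_∞ for each t ∈ [0,T]. -/

import Mathlib

open MeasureTheory Filter Set

/-- `x` is bounded and uniformly continuous on `(-∞,0]` (membership in `BU`,
where only the restriction of `x` to `(-∞,0]` is relevant). -/
def IsBU (m : ℕ) (x : ℝ → Fin m → ℝ) : Prop :=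
  (∃ C : ℝ, ∀ s : ℝ, s ≤ 0 → ‖x s‖ ≤ C) ∧
  ∀ ε > (0:ℝ), ∃ δ > (0:ℝ), ∀ s : ℝ, s ≤ 0 → ∀ s' : ℝ, s' ≤ 0 →
    |s - s'| < δ → ‖x s - x s'‖ < ε

/-- the supremum norm `‖x‖_∞ = sup_{s ≤ 0} ‖x(s)‖`. -/
noncomputable def supNorm (m : ℕ) (x : ℝ → Fin m → ℝ) : ℝ :=
  ⨆ s : Set.Iic (0:ℝ), ‖x (s : ℝ)‖

/-- time shift: `shift m x t = x_t`, where `x_t(s) = x(t+s)`. -/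
def shift (m : ℕ) (x : ℝ → Fin m → ℝ) (t : ℝ) : ℝ → Fin m → ℝ :=
  fun s => x (t + s)

/-- The operator `Dx = x(0) - ∫_{-∞}^0 [dν(s)] x(s)`, where the matrix of real
(signed) Borel measures `ν` is given through a positive part `νp` and a
negative part `νn` (Jordan decomposition), i.e. `ν i j = νp i j - νn i j`. -/
noncomputable def Dop (m : ℕ) (νp νn : Fin m → Fin m → Measure ℝ)
    (x : ℝ → Fin m → ℝ) : Fin m → ℝ :=
  fun i => x 0 i - ∑ j : Fin m,
    ((∫ s in Set.Iic (0:ℝ), x s j ∂(νp i j)) - ∫ s in Set.Iic (0:ℝ), x s j ∂(νn i j))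

/-- the measures `ν_ij` have finite total variation and `|ν_ij|({0}) = 0`. -/
def NuCond (m : ℕ) (νp νn : Fin m → Fin m → Measure ℝ) : Prop :=
  (∀ i j, νp i j Set.univ ≠ ⊤) ∧ (∀ i j, νn i j Set.univ ≠ ⊤) ∧
  (∀ i j, νp i j {0} = 0) ∧ (∀ i j, νn i j {0} = 0)

/-- `D` is stable: there is a continuous `c : [0,∞) → [0,∞)` with `c(t) → 0`
as `t → ∞` such that every continuous `x : ℝ → ℝ^m` with `x_0 ∈ BU` and
`D x_t = 0` for all `t ≥ 0` satisfies `‖x(t)‖ ≤ c(t) ‖x_0‖_∞` for all `t ≥ 0`. -/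
def IsStableOp (m : ℕ) (D : (ℝ → Fin m → ℝ) → Fin m → ℝ) : Prop :=
  ∃ c : ℝ → ℝ, ContinuousOn c (Set.Ici 0) ∧ (∀ t : ℝ, 0 ≤ t → 0 ≤ c t) ∧
    Filter.Tendsto c Filter.atTop (nhds 0) ∧
    ∀ x : ℝ → Fin m → ℝ, Continuous x → IsBU m x →
      (∀ t : ℝ, 0 ≤ t → D (shift m x t) = 0) →
      ∀ t : ℝ, 0 ≤ t → ‖x t‖ ≤ c t * supNorm m x

/-- the convolution operator `D̂`, `(D̂x)(s) = D x_s`. -/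
noncomputable def Dhat (m : ℕ) (νp νn : Fin m → Fin m → Measure ℝ)
    (x : ℝ → Fin m → ℝ) : ℝ → Fin m → ℝ :=
  fun s => Dop m νp νn (shift m x s)

/-- the seminorm `‖x‖_n = sup_{s ∈ [-n,0]} ‖x(s)‖`. -/
noncomputable def normOn (m : ℕ) (n : ℕ) (x : ℝ → Fin m → ℝ) : ℝ :=
  ⨆ s : Set.Icc (-(n:ℝ)) 0, ‖x (s : ℝ)‖

/-- the compact-open metric
`d(x,y) = ∑_{n ≥ 1} 2⁻ⁿ ‖x-y‖_n / (1 + ‖x-y‖_n)`. -/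
noncomputable def coDist (m : ℕ) (x y : ℝ → Fin m → ℝ) : ℝ :=
  ∑' n : ℕ, (1/2 : ℝ)^(n+1) *
    (normOn m (n+1) (fun s => x s - y s)) / (1 + normOn m (n+1) (fun s => x s - y s))

/-- `sup_{0 ≤ u ≤ t} ‖h(u)‖`. -/
noncomputable def supOn (m : ℕ) (h : ℝ → Fin m → ℝ) (t : ℝ) : ℝ :=
  ⨆ u : Set.Icc (0:ℝ) t, ‖h (u : ℝ)‖

/-- the order `x ≤_D y`, i.e. `D x_s ≤ D y_s` (componentwise) for all `s ≤ 0`. -/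
def leD (m : ℕ) (νp νn : Fin m → Fin m → Measure ℝ) (x y : ℝ → Fin m → ℝ) : Prop :=
  ∀ s : ℝ, s ≤ 0 → ∀ i, Dhat m νp νn x s i ≤ Dhat m νp νn y s i

/-- helper: the measure of `Ioc (-1/(n+1)) 0` tends to `μ {0}`. -/
lemma measure_Ioc_tendsto (μ : Measure ℝ) (hfin : μ Set.univ ≠ ⊤) (h0 : μ {0} = 0) :
    Tendsto (fun n : ℕ => μ (Set.Ioc (-(1/(n+1):ℝ)) 0)) atTop (nhds 0) := by
  have hiInter : ⋂ n : ℕ, Set.Ioc (-(1/(n+1):ℝ)) 0 = {0} := by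
    ext s
    simp only [Set.mem_iInter, Set.mem_Ioc, Set.mem_singleton_iff]
    constructor
    · intro hs
      have hs0 : s ≤ 0 := (hs 0).2
      by_contra hne
      have hslt : s < 0 := lt_of_le_of_ne hs0 hne
      obtain ⟨n, hn⟩ := exists_nat_one_div_lt (show (0:ℝ) < -s by linarith)
      have := (hs n).1
      linarith
    · rintro rfl
      intro n
      constructor
      · have : (0:ℝ) < 1/(n+1) := by positivity
        linarith
      · exact le_rfl
  have hmono : Antitone (fun n : ℕ => Set.Ioc (-(1/(n+1):ℝ)) 0) := by
    intro n n' hnn'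
    apply Set.Ioc_subset_Ioc_left
    have h1 : (1:ℝ)/(n'+1) ≤ 1/(n+1) := by
      apply one_div_le_one_div_of_le
      · positivity
      · push_cast; linarith [(Nat.cast_le (α := ℝ)).mpr hnn']
    linarith
  have htend := tendsto_measure_iInter_atTop (μ := μ)
    (s := fun n : ℕ => Set.Ioc (-(1/(n+1):ℝ)) 0)
    (fun n => measurableSet_Ioc.nullMeasurableSet) hmono
    ⟨0, ne_top_of_le_ne_top hfin (measure_mono (Set.subset_univ _))⟩
  rw [hiInter, h0] at htend
  simpa [Function.comp_def] using htend

/-- choice of `r` so that the total mass of all entries near `0` is small. -/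
lemma exists_r (m : ℕ) (νp νn : Fin m → Fin m → Measure ℝ) (hν : NuCond m νp νn) :
    ∃ r : ℝ, 0 < r ∧ ∀ i j,
      (νp i j (Set.Ioc (-r) 0)).toReal + (νn i j (Set.Ioc (-r) 0)).toReal
        ≤ 1/(4*(m+1)) := by
  obtain ⟨hpf, hnf, hp0, hn0⟩ := hν
  set ε : ENNReal := ENNReal.ofReal (1/(8*(m+1))) with hε
  have hεpos : 0 < ε := by
    rw [hε]
    exact ENNReal.ofReal_pos.mpr (by positivity)
  have hev : ∀ᶠ n : ℕ in atTop, ∀ i j,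
      νp i j (Set.Ioc (-(1/(n+1):ℝ)) 0) < ε ∧ νn i j (Set.Ioc (-(1/(n+1):ℝ)) 0) < ε := by
    rw [eventually_all]
    intro i
    rw [eventually_all]
    intro j
    have h1 := (measure_Ioc_tendsto (νp i j) (hpf i j) (hp0 i j)).eventually_lt_const hεpos
    have h2 := (measure_Ioc_tendsto (νn i j) (hnf i j) (hn0 i j)).eventually_lt_const hεpos
    exact h1.and h2
  obtain ⟨n, hn⟩ := hev.exists
  refine ⟨1/(n+1), by positivity, fun i j => ?_⟩
  obtain ⟨h1, h2⟩ := hn i j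
  have e1 : (νp i j (Set.Ioc (-(1/(n+1):ℝ)) 0)).toReal ≤ 1/(8*(m+1)) :=
    ENNReal.toReal_le_of_le_ofReal (by positivity) h1.le
  have e2 : (νn i j (Set.Ioc (-(1/(n+1):ℝ)) 0)).toReal ≤ 1/(8*(m+1)) :=
    ENNReal.toReal_le_of_le_ofReal (by positivity) h2.le
  have : (1:ℝ)/(8*(m+1)) + 1/(8*(m+1)) = 1/(4*(m+1)) := by
    field_simp; ring
  linarith

theorem statement2 (m : ℕ) (νp νn : Fin m → Fin m → Measure ℝ)
    (hν : NuCond m νp νn) (T : ℝ) (hT : 0 < T) :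
    ∃ k1 : ℝ, 0 < k1 ∧ ∃ k2 : ℝ, 0 < k2 ∧
      ∀ h : ℝ → Fin m → ℝ, ContinuousOn h (Set.Ici 0) →
      ∀ φ x : ℝ → Fin m → ℝ, IsBU m φ → Dop m νp νn φ = h 0 →
        Continuous x → (∀ s : ℝ, s ≤ 0 → x s = φ s) →
        (∀ t : ℝ, 0 ≤ t → Dop m νp νn (shift m x t) = h t) →
        ∀ t : ℝ, 0 ≤ t → t ≤ T →
          supNorm m (shift m x t) ≤ k1 * supOn m h t + k2 * supNorm m φ := by
  obtain ⟨hpf, hnf, hp0, hn0⟩ := hν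
  obtain ⟨r, hr, hrsmall⟩ := exists_r m νp νn ⟨hpf, hnf, hp0, hn0⟩
  set V : ℝ := ∑ i : Fin m, ∑ j : Fin m,
      ((νp i j Set.univ).toReal + (νn i j Set.univ).toReal) with hVdef
  have hV0 : 0 ≤ V := by
    apply Finset.sum_nonneg; intro i _
    apply Finset.sum_nonneg; intro j _
    positivity
  -- recursive constants
  let c : ℕ → ℝ := fun k => Nat.rec 0 (fun _ ck => 2 + 2*V*ck) k
  let d : ℕ → ℝ := fun k => Nat.rec 1 (fun _ dk => 1 + 2*V + 2*V*dk) k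
  have hc0 : ∀ k, 0 ≤ c k := by
    intro k
    induction k with
    | zero => exact le_rfl
    | succ k ih =>
      show 0 ≤ 2 + 2*V*(c k)
      nlinarith
  have hd1 : ∀ k, 1 ≤ d k := by
    intro k
    induction k with
    | zero => exact le_rfl
    | succ k ih =>
      show 1 ≤ 1 + 2*V + 2*V*(d k)
      nlinarith
  -- number of steps
  obtain ⟨N, hN⟩ := exists_nat_ge (T/r)
  have hTN : T ≤ (N+1) * r := by
    have : T/r ≤ N + 1 := by linarith
    calc T = (T/r) * r := by field_simp
    _ ≤ ((N:ℝ)+1) * r := by nlinarith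
  refine ⟨c (N+1), ?_, d (N+1), by linarith [hd1 (N+1)], ?_⟩
  · show (0:ℝ) < 2 + 2*V*(c N)
    nlinarith [hc0 N]
  intro h hh φ x hφBU hDφ hx hxφ hDx t ht htT
  -- basic bounds
  obtain ⟨⟨Cφ, hCφ⟩, -⟩ := hφBU
  set B : ℝ := supNorm m φ with hBdef
  have hBbdd : BddAbove (Set.range fun s : Set.Iic (0:ℝ) => ‖φ (s:ℝ)‖) := by
    refine ⟨Cφ, ?_⟩
    rintro y ⟨⟨s, hs⟩, rfl⟩
    exact hCφ s hs
  have hB : ∀ s : ℝ, s ≤ 0 → ‖φ s‖ ≤ B := fun s hs =>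
    le_ciSup hBbdd (⟨s, hs⟩ : Set.Iic (0:ℝ))
  have hB0 : 0 ≤ B := Real.iSup_nonneg fun _ => norm_nonneg _
  set H : ℝ := supOn m h t with hHdef
  obtain ⟨Ch, hCh⟩ := (isCompact_Icc (a := (0:ℝ)) (b := t)).exists_bound_of_continuousOn
      (hh.mono (fun u hu => hu.1))
  have hHbdd : BddAbove (Set.range fun u : Set.Icc (0:ℝ) t => ‖h (u:ℝ)‖) := by
    refine ⟨Ch, ?_⟩
    rintro y ⟨⟨u, hu⟩, rfl⟩
    exact hCh u hu
  have hH : ∀ u : ℝ, 0 ≤ u → u ≤ t → ‖h u‖ ≤ H := fun u hu1 hu2 =>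
    le_ciSup hHbdd (⟨u, hu1, hu2⟩ : Set.Icc (0:ℝ) t)
  have hH0 : 0 ≤ H := Real.iSup_nonneg fun _ => norm_nonneg _
  -- global bound for x up to time t
  obtain ⟨Cx, hCx⟩ := (isCompact_Icc (a := (0:ℝ)) (b := t)).exists_bound_of_continuousOn
      hx.continuousOn
  set C0 : ℝ := max Cφ Cx with hC0def
  have hC0 : ∀ v : ℝ, v ≤ t → ‖x v‖ ≤ C0 := by
    intro v hv
    rcases le_or_gt v 0 with hv0 | hv0
    · rw [hxφ v hv0]
      exact (hCφ v hv0).trans (le_max_left _ _)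
    · exact (hCx v ⟨hv0.le, hv⟩).trans (le_max_right _ _)
  -- integrability
  have hint : ∀ (μ : Measure ℝ), μ Set.univ ≠ ⊤ → ∀ u : ℝ, u ≤ t → ∀ j,
      IntegrableOn (fun s => x (u+s) j) (Set.Iic 0) μ := by
    intro μ hμ u hu j
    haveI : IsFiniteMeasure μ := ⟨lt_top_iff_ne_top.2 hμ⟩
    refine Integrable.mono' (integrable_const C0)
      ((continuous_apply j).comp (hx.comp (continuous_const.add continuous_id))).aestronglyMeasurable ?_
    filter_upwards [ae_restrict_mem measurableSet_Iic] with s hs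
    calc ‖x (u+s) j‖ ≤ ‖x (u+s)‖ := norm_le_pi_norm _ j
    _ ≤ C0 := hC0 _ (by simp only [Set.mem_Iic] at hs; linarith)
  -- key pointwise estimate
  have key : ∀ u : ℝ, 0 ≤ u → u ≤ t → ∀ Cnear Cfar : ℝ, 0 ≤ Cnear → 0 ≤ Cfar →
      (∀ v : ℝ, u - r ≤ v → v ≤ u → ‖x v‖ ≤ Cnear) →
      (∀ v : ℝ, v ≤ u - r → ‖x v‖ ≤ Cfar) →
      ‖x u‖ ≤ H + Cnear * (1/2) + Cfar * V := by
    intro u hu0 hut Cnear Cfar hCn0 hCf0 hnear hfar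
    have hRHS : 0 ≤ H + Cnear * (1/2) + Cfar * V := by positivity
    rw [pi_norm_le_iff_of_nonneg hRHS]
    intro i
    have hD := congrFun (hDx u hu0) i
    simp only [Dop, shift, add_zero] at hD
    have hxui : x u i = h u i + ∑ j : Fin m,
        ((∫ s in Set.Iic (0:ℝ), x (u+s) j ∂(νp i j))
          - ∫ s in Set.Iic (0:ℝ), x (u+s) j ∂(νn i j)) := by linarith
    have hbound : ∀ j : Fin m,
        |(∫ s in Set.Iic (0:ℝ), x (u+s) j ∂(νp i j))
          - ∫ s in Set.Iic (0:ℝ), x (u+s) j ∂(νn i j)|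
        ≤ Cnear * ((νp i j (Set.Ioc (-r) 0)).toReal + (νn i j (Set.Ioc (-r) 0)).toReal)
          + Cfar * ((νp i j Set.univ).toReal + (νn i j Set.univ).toReal) := by
      intro j
      have hrle : (-r : ℝ) ≤ 0 := by linarith
      have hip := hint (νp i j) (hpf i j) u hut j
      have hin := hint (νn i j) (hnf i j) u hut j
      have hsub1 : Set.Iic (-r) ⊆ Set.Iic (0:ℝ) := Set.Iic_subset_Iic.2 hrle
      have hsub2 : Set.Ioc (-r) (0:ℝ) ⊆ Set.Iic 0 := Set.Ioc_subset_Iic_self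
      have hsplit : ∀ (μ : Measure ℝ), IntegrableOn (fun s => x (u+s) j) (Set.Iic 0) μ →
          (∫ s in Set.Iic (0:ℝ), x (u+s) j ∂μ)
            = (∫ s in Set.Iic (-r), x (u+s) j ∂μ) + ∫ s in Set.Ioc (-r) 0, x (u+s) j ∂μ := by
        intro μ hμi
        rw [← Set.Iic_union_Ioc_eq_Iic hrle,
          setIntegral_union (Set.Iic_disjoint_Ioc le_rfl) measurableSet_Ioc
            (hμi.mono_set hsub1) (hμi.mono_set hsub2)]
      have hfarb : ∀ (μ : Measure ℝ), μ Set.univ ≠ ⊤ →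
          IntegrableOn (fun s => x (u+s) j) (Set.Iic 0) μ →
          |∫ s in Set.Iic (-r), x (u+s) j ∂μ| ≤ Cfar * (μ Set.univ).toReal := by
        intro μ hμ hμi
        rw [← Real.norm_eq_abs]
        calc ‖∫ s in Set.Iic (-r), x (u+s) j ∂μ‖
            ≤ Cfar * (μ (Set.Iic (-r))).toReal := by
              refine norm_setIntegral_le_of_norm_le_const
                ((measure_mono (Set.subset_univ _)).trans_lt (lt_top_iff_ne_top.2 hμ))
                ?_
              intro s hs
              calc ‖x (u+s) j‖ ≤ ‖x (u+s)‖ := norm_le_pi_norm _ j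
              _ ≤ Cfar := hfar _ (by simp only [Set.mem_Iic] at hs; linarith)
        _ ≤ Cfar * (μ Set.univ).toReal :=
            mul_le_mul_of_nonneg_left
              (ENNReal.toReal_mono hμ (measure_mono (Set.subset_univ _))) hCf0
      have hnearb : ∀ (μ : Measure ℝ), μ Set.univ ≠ ⊤ →
          |∫ s in Set.Ioc (-r) 0, x (u+s) j ∂μ| ≤ Cnear * (μ (Set.Ioc (-r) 0)).toReal := by
        intro μ hμ
        rw [← Real.norm_eq_abs]
        refine norm_setIntegral_le_of_norm_le_const
          ((measure_mono (Set.subset_univ _)).trans_lt (lt_top_iff_ne_top.2 hμ))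
          ?_
        intro s hs
        calc ‖x (u+s) j‖ ≤ ‖x (u+s)‖ := norm_le_pi_norm _ j
        _ ≤ Cnear := hnear _ (by simp only [Set.mem_Ioc] at hs; linarith [hs.1])
            (by simp only [Set.mem_Ioc] at hs; linarith [hs.2])
      rw [hsplit (νp i j) hip, hsplit (νn i j) hin]
      have t1 := hfarb (νp i j) (hpf i j) hip
      have t2 := hfarb (νn i j) (hnf i j) hin
      have t3 := hnearb (νp i j) (hpf i j)
      have t4 := hnearb (νn i j) (hnf i j)
      have tri : |((∫ s in Set.Iic (-r), x (u+s) j ∂(νp i j))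
            + ∫ s in Set.Ioc (-r) 0, x (u+s) j ∂(νp i j))
          - ((∫ s in Set.Iic (-r), x (u+s) j ∂(νn i j))
            + ∫ s in Set.Ioc (-r) 0, x (u+s) j ∂(νn i j))|
          ≤ (|∫ s in Set.Iic (-r), x (u+s) j ∂(νp i j)|
            + |∫ s in Set.Ioc (-r) 0, x (u+s) j ∂(νp i j)|)
          + (|∫ s in Set.Iic (-r), x (u+s) j ∂(νn i j)|
            + |∫ s in Set.Ioc (-r) 0, x (u+s) j ∂(νn i j)|) :=
        (abs_sub _ _).trans (add_le_add (abs_add_le _ _) (abs_add_le _ _))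
      linarith
    -- sum up
    have hsumnear : ∑ j : Fin m,
        ((νp i j (Set.Ioc (-r) 0)).toReal + (νn i j (Set.Ioc (-r) 0)).toReal) ≤ 1/2 := by
      calc ∑ j : Fin m, ((νp i j (Set.Ioc (-r) 0)).toReal + (νn i j (Set.Ioc (-r) 0)).toReal)
          ≤ ∑ _j : Fin m, 1/(4*((m:ℝ)+1)) :=
            Finset.sum_le_sum fun j _ => hrsmall i j
      _ = (m:ℝ) * (1/(4*((m:ℝ)+1))) := by
            rw [Finset.sum_const, Finset.card_univ, Fintype.card_fin, nsmul_eq_mul]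
      _ ≤ 1/2 := by
            rw [mul_one_div, div_le_div_iff₀ (by positivity) (by norm_num)]
            have : (0:ℝ) ≤ (m:ℝ) := Nat.cast_nonneg m
            linarith
    have hsumfar : ∑ j : Fin m,
        ((νp i j Set.univ).toReal + (νn i j Set.univ).toReal) ≤ V := by
      rw [hVdef]
      refine Finset.single_le_sum (f := fun i' => ∑ j : Fin m,
        ((νp i' j Set.univ).toReal + (νn i' j Set.univ).toReal)) ?_ (Finset.mem_univ i)
      intro i' _
      apply Finset.sum_nonneg; intro j _; positivity
    calc ‖x u i‖ = |x u i| := Real.norm_eq_abs _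
    _ = |h u i + ∑ j : Fin m,
        ((∫ s in Set.Iic (0:ℝ), x (u+s) j ∂(νp i j))
          - ∫ s in Set.Iic (0:ℝ), x (u+s) j ∂(νn i j))| := by rw [hxui]
    _ ≤ |h u i| + |∑ j : Fin m,
        ((∫ s in Set.Iic (0:ℝ), x (u+s) j ∂(νp i j))
          - ∫ s in Set.Iic (0:ℝ), x (u+s) j ∂(νn i j))| := abs_add_le _ _
    _ ≤ |h u i| + ∑ j : Fin m, |(∫ s in Set.Iic (0:ℝ), x (u+s) j ∂(νp i j))
          - ∫ s in Set.Iic (0:ℝ), x (u+s) j ∂(νn i j)| :=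
        add_le_add_right (Finset.abs_sum_le_sum_abs _ _) _
    _ ≤ H + ∑ j : Fin m,
        (Cnear * ((νp i j (Set.Ioc (-r) 0)).toReal + (νn i j (Set.Ioc (-r) 0)).toReal)
          + Cfar * ((νp i j Set.univ).toReal + (νn i j Set.univ).toReal)) := by
        refine add_le_add ?_ (Finset.sum_le_sum fun j _ => hbound j)
        calc |h u i| = ‖h u i‖ := (Real.norm_eq_abs _).symm
        _ ≤ ‖h u‖ := norm_le_pi_norm _ i
        _ ≤ H := hH u hu0 hut
    _ = H + (Cnear * ∑ j : Fin m,
          ((νp i j (Set.Ioc (-r) 0)).toReal + (νn i j (Set.Ioc (-r) 0)).toReal)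
        + Cfar * ∑ j : Fin m,
          ((νp i j Set.univ).toReal + (νn i j Set.univ).toReal)) := by
        rw [Finset.sum_add_distrib, ← Finset.mul_sum, ← Finset.mul_sum]
    _ ≤ H + Cnear * (1/2) + Cfar * V := by
        have e1 : Cnear * ∑ j : Fin m,
            ((νp i j (Set.Ioc (-r) 0)).toReal + (νn i j (Set.Ioc (-r) 0)).toReal)
            ≤ Cnear * (1/2) := mul_le_mul_of_nonneg_left hsumnear hCn0
        have e2 : Cfar * ∑ j : Fin m,
            ((νp i j Set.univ).toReal + (νn i j Set.univ).toReal)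
            ≤ Cfar * V := mul_le_mul_of_nonneg_left hsumfar hCf0
        linarith
  -- main induction
  have main : ∀ k : ℕ, ∀ u : ℝ, 0 ≤ u → u ≤ t → u ≤ (k:ℝ) * r →
      ‖x u‖ ≤ c k * H + d k * B := by
    intro k
    induction k with
    | zero =>
      intro u hu0 hut hukr
      have hu : u = 0 := le_antisymm (by simpa using hukr) hu0
      subst hu
      have : ‖x 0‖ = ‖φ 0‖ := by rw [hxφ 0 le_rfl]
      rw [this]
      have : c 0 * H + d 0 * B = B := by
        show (0:ℝ) * H + 1 * B = B; ring
      rw [this]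
      exact hB 0 le_rfl
    | succ k ih =>
      intro u hu0 hut hukr
      set b : ℝ := min (((k:ℝ)+1) * r) t with hbdef
      have hb0 : 0 ≤ b := le_min (by positivity) ht
      have hK : (Set.Icc (0:ℝ) b).Nonempty := ⟨0, le_rfl, hb0⟩
      obtain ⟨w, hwK, hwmax⟩ := (isCompact_Icc (a := (0:ℝ)) (b := b)).exists_isMaxOn hK
        (hx.norm.continuousOn)
      set S : ℝ := ‖x w‖ with hSdef
      have hS0 : 0 ≤ S := norm_nonneg _
      have hSb : ∀ v : ℝ, 0 ≤ v → v ≤ b → ‖x v‖ ≤ S := fun v h1 h2 => hwmax ⟨h1, h2⟩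
      have hAk0 : 0 ≤ c k * H + d k * B := by
        have := hc0 k; have := hd1 k; nlinarith
      have hwt : w ≤ t := hwK.2.trans (min_le_right _ _)
      have hwkr : w ≤ ((k:ℝ)+1) * r := hwK.2.trans (min_le_left _ _)
      have hkey := key w hwK.1 hwt (B + S) (B + (c k * H + d k * B))
        (by linarith) (by linarith) ?_ ?_
      · -- conclude
        have hstep : S ≤ c (k+1) * H + d (k+1) * B := by
          have hck : c (k+1) = 2 + 2*V*(c k) := rfl
          have hdk : d (k+1) = 1 + 2*V + 2*V*(d k) := rfl
          rw [hck, hdk]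
          nlinarith [hkey]
        have hub : u ∈ Set.Icc (0:ℝ) b := ⟨hu0, le_min (by push_cast at hukr ⊢; linarith) hut⟩
        exact (hSb u hub.1 hub.2).trans hstep
      · -- near bound
        intro v hv1 hv2
        rcases le_or_gt v 0 with hv0 | hv0
        · rw [hxφ v hv0]; linarith [hB v hv0]
        · have : ‖x v‖ ≤ S := hSb v hv0.le (hv2.trans hwK.2)
          linarith
      · -- far bound
        intro v hv
        rcases le_or_gt v 0 with hv0 | hv0
        · rw [hxφ v hv0]; linarith [hB v hv0]
        · have hvkr : v ≤ (k:ℝ) * r := by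
            have : v ≤ w - r := hv
            have := hwkr
            linarith
          have hvt : v ≤ t := by linarith [hwt, hr]
          have := ih v hv0.le hvt hvkr
          linarith
  -- conclude
  have hfinal : ∀ s : ℝ, s ≤ 0 → ‖x (t+s)‖ ≤ c (N+1) * H + d (N+1) * B := by
    intro s hs
    rcases le_or_gt (t+s) 0 with hts | hts
    · rw [hxφ _ hts]
      have h1 := hB _ hts
      have h2 : 0 ≤ c (N+1) * H := mul_nonneg (hc0 (N+1)) hH0
      have h3 : B ≤ d (N+1) * B := le_mul_of_one_le_left hB0 (hd1 (N+1))
      linarith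
    · refine main (N+1) (t+s) hts.le (by linarith) ?_
      push_cast
      calc t + s ≤ t := by linarith
      _ ≤ T := htT
      _ ≤ ((N:ℝ)+1) * r := hTN
  refine Real.iSup_le (fun s => ?_) ?_
  · show ‖x (t + (s:ℝ))‖ ≤ _
    exact hfinal s s.2
  · have h2 : 0 ≤ c (N+1) * H := mul_nonneg (hc0 (N+1)) hH0
    have h3 : 0 ≤ d (N+1) * B := mul_nonneg (by linarith [hd1 (N+1)]) hB0
    linarith
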